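/- Let S be a local ring, let β : R → S be a homomorphism of commutative rings, and let I be an ideal of R. If the extended ideal β(I)·S is a principal ideal generated by a non-zero divisor of S, then there exists an element f ∈ I such that β(f) generates β(I)·S. -/

import Mathlib

/-- In a local ring, if a finite sum is a unit, then some summand is a unit. -/
lemma exists_isUnit_of_isUnit_sum {S : Type*} [CommRing S] [IsLocalRing S]
    {n : ℕ} {f : Fin n → S} (h : IsUnit (∑ i, f i)) : ∃ i, IsUnit (f i) := by
  induction n with
  | zero => simp at h
  | succ n ih =>
    rw [Fin.sum_univ_succ] at h
    rcases IsLocalRing.isUnit_or_isUnit_of_isUnit_add h with h1 | h2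
    · exact ⟨0, h1⟩
    · obtain ⟨i, hi⟩ := ih h2
      exact ⟨i.succ, hi⟩

/-- Let `S` be a local ring, `β : R → S` a ring homomorphism and `I` an ideal of `R`.
If the extended ideal `β(I)·S` is a principal ideal generated by a non-zero divisor of
`S`, then some element `f ∈ I` has image `β f` generating `β(I)·S`. -/
theorem exists_generator_in_image_of_principal
    {R S : Type*} [CommRing R] [CommRing S] [IsLocalRing S]
    (β : R →+* S) (I : Ideal R)
    (h : ∃ g : S, g ∈ nonZeroDivisors S ∧ I.map β = Ideal.span {g}) :
    ∃ f ∈ I, I.map β = Ideal.span {β f} := by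
  obtain ⟨g, hg, hspan⟩ := h
  have hg_mem : g ∈ I.map β := hspan ▸ Ideal.subset_span rfl
  rw [Ideal.map, Ideal.span] at hg_mem
  obtain ⟨n, a, m, hsum⟩ := Submodule.mem_span_set'.1 hg_mem
  choose x hxI hx using fun i => (m i).2
  have hmem : ∀ i, β (x i) ∈ Ideal.span {g} := fun i => by
    rw [← hspan]; exact Ideal.mem_map_of_mem β (hxI i)
  choose c hc using fun i => Ideal.mem_span_singleton'.1 (hmem i)
  have hg_eq : (∑ i, a i * c i) * g = g := by
    rw [Finset.sum_mul]
    calc ∑ i, a i * c i * g = ∑ i, a i * β (x i) := by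
          refine Finset.sum_congr rfl fun i _ => ?_
          rw [mul_assoc, hc i]
      _ = ∑ i, a i • (m i : S) := by
          refine Finset.sum_congr rfl fun i _ => ?_
          rw [smul_eq_mul, hx i]
      _ = g := hsum
  have hone : (∑ i, a i * c i) = 1 := by
    have h2 : ((∑ i, a i * c i) - 1) * g = 0 := by rw [sub_mul, one_mul, hg_eq, sub_self]
    have := (mul_right_mem_nonZeroDivisors_eq_zero_iff hg).mp h2
    exact sub_eq_zero.mp this
  obtain ⟨i, hi⟩ := exists_isUnit_of_isUnit_sum (f := fun i => a i * c i)
    (hone ▸ isUnit_one)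
  refine ⟨x i, hxI i, ?_⟩
  rw [hspan, ← hc i, Ideal.span_singleton_mul_left_unit (isUnit_of_mul_isUnit_right hi)]
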